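/- Every cyclic-uniform uniserial module is uniform: if M is a cu-uniserial left R-module, then every pair of nonzero submodules of M has nonzero intersection. -/

import Mathlib

/-- The radical of a module: intersection of all maximal submodules. -/
def ModRadical (R M : Type*) [Ring R] [AddCommGroup M] [Module R M] : Submodule R M :=
  sInf {N : Submodule R M | IsCoatom N}

/-- A module is cyclic if it is generated by one element. -/
def IsCyclicMod (R M : Type*) [Ring R] [AddCommGroup M] [Module R M] : Prop :=
  ∃ x : M, Submodule.span R {x} = ⊤

/-- A module is uniform if it is nonzero and any two nonzero submodules intersect nontrivially. -/
def IsUniformMod (R M : Type*) [Ring R] [AddCommGroup M] [Module R M] : Prop :=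
  Nontrivial M ∧ ∀ A B : Submodule R M, A ≠ ⊥ → B ≠ ⊥ → A ⊓ B ≠ ⊥

/-- A module is cyclic-uniform uniserial (cu-uniserial) if it is nonzero and for every
nonzero finitely generated submodule `K`, the quotient `K / Rad K` is cyclic and uniform. -/
def IsCUUniserial (R M : Type*) [Ring R] [AddCommGroup M] [Module R M] : Prop :=
  Nontrivial M ∧ ∀ K : Submodule R M, K ≠ ⊥ → K.FG →
    IsCyclicMod R (↥K ⧸ ModRadical R ↥K) ∧ IsUniformMod R (↥K ⧸ ModRadical R ↥K)

section Aux

variable {R M N : Type*} [Ring R] [AddCommGroup M] [Module R M]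
  [AddCommGroup N] [Module R N]

lemma isCoatom_comap (f : M →ₗ[R] N) {p : Submodule R N} (hp : IsCoatom p)
    (hr : ¬ LinearMap.range f ≤ p) : IsCoatom (p.comap f) := by
  obtain ⟨y, hyr, hy⟩ := SetLike.not_le_iff_exists.mp hr
  obtain ⟨x, rfl⟩ := hyr
  constructor
  · intro htop
    exact hy (Submodule.mem_comap.mp (htop ▸ Submodule.mem_top : x ∈ p.comap f))
  · intro W hW
    obtain ⟨w, hwW, hw⟩ := SetLike.exists_of_lt hW
    have hfw : f w ∉ p := hw
    have hsup : p ⊔ Submodule.span R {f w} = ⊤ :=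
      hp.2 _ (left_lt_sup.mpr (fun hle => hfw (hle (Submodule.mem_span_singleton_self _))))
    rw [eq_top_iff]
    intro m _
    have hm : f m ∈ p ⊔ Submodule.span R {f w} := hsup ▸ Submodule.mem_top
    obtain ⟨u, hu, z, hz, huz⟩ := Submodule.mem_sup.mp hm
    obtain ⟨r, rfl⟩ := Submodule.mem_span_singleton.mp hz
    have hmem : m - r • w ∈ p.comap f := by
      rw [Submodule.mem_comap, map_sub, map_smul]
      have : f m - r • f w = u := by rw [← huz]; abel
      rwa [this]
    have : m - r • w ∈ W := le_of_lt hW hmem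
    have : (m - r • w) + r • w ∈ W := W.add_mem this (W.smul_mem r hwW)
    simpa using this

lemma map_radical_le (f : M →ₗ[R] N) :
    (ModRadical R M).map f ≤ ModRadical R N := by
  rintro y ⟨x, hx, rfl⟩
  rw [ModRadical, Submodule.mem_sInf]
  intro p hp
  by_cases hr : LinearMap.range f ≤ p
  · exact hr ⟨x, rfl⟩
  · exact Submodule.mem_sInf.mp hx _ (isCoatom_comap f hp hr)

end Aux

theorem stmt0 {R M : Type*} [Ring R] [AddCommGroup M] [Module R M]
    (h : IsCUUniserial R M) :
    ∀ A B : Submodule R M, A ≠ ⊥ → B ≠ ⊥ → A ⊓ B ≠ ⊥ := by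
  obtain ⟨-, hCU⟩ := h
  intro A B hA hB hAB
  obtain ⟨a, haA, ha0⟩ := (Submodule.ne_bot_iff A).mp hA
  obtain ⟨b, hbB, hb0⟩ := (Submodule.ne_bot_iff B).mp hB
  have hRaA : Submodule.span R {a} ≤ A := Submodule.span_le.mpr (by simpa using haA)
  have hRbB : Submodule.span R {b} ≤ B := Submodule.span_le.mpr (by simpa using hbB)
  have hdisj : Submodule.span R {a} ⊓ Submodule.span R {b} = ⊥ :=
    le_bot_iff.mp (hAB ▸ inf_le_inf hRaA hRbB)
  set K : Submodule R M := Submodule.span R {a} ⊔ Submodule.span R {b} with hK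
  have hRaK : Submodule.span R {a} ≤ K := le_sup_left
  have hRbK : Submodule.span R {b} ≤ K := le_sup_right
  have hKne : K ≠ ⊥ := by
    intro hbot
    exact ha0 ((Submodule.eq_bot_iff K).mp hbot a
      (hRaK (Submodule.mem_span_singleton_self a)))
  have hKfg : K.FG := (Submodule.fg_span_singleton a).sup (Submodule.fg_span_singleton b)
  obtain ⟨-, hUnif⟩ := hCU K hKne hKfg
  -- key fact: a generator of a cyclic submodule inside K is not in the radical of K
  have key : ∀ (c : M), c ≠ 0 → ∀ (hcK : Submodule.span R {c} ≤ K)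
      (πC : ↥K →ₗ[R] ↥((Submodule.span R {c}).comap K.subtype)),
      (∀ x : ((Submodule.span R {c}).comap K.subtype), πC ↑x = x) →
      (⟨c, hcK (Submodule.mem_span_singleton_self c)⟩ : ↥K) ∉ ModRadical R ↥K := by
    intro c hc0 hcK πC hπ hmem
    have hcC' : (⟨c, hcK (Submodule.mem_span_singleton_self c)⟩ : ↥K) ∈
        (Submodule.span R {c}).comap K.subtype :=
      Submodule.mem_span_singleton_self c
    let c' : ↥((Submodule.span R {c}).comap K.subtype) :=
      ⟨⟨c, hcK (Submodule.mem_span_singleton_self c)⟩, hcC'⟩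
    have h2 : c' ∈ ModRadical R ↥((Submodule.span R {c}).comap K.subtype) := by
      have hh := map_radical_le πC (Submodule.mem_map_of_mem hmem)
      rw [show πC ⟨c, hcK (Submodule.mem_span_singleton_self c)⟩ = c' from hπ c'] at hh
      exact hh
    let e := Submodule.comapSubtypeEquivOfLe hcK
    have h3 : e c' ∈ ModRadical R (Submodule.span R {c}) :=
      map_radical_le e.toLinearMap (Submodule.mem_map_of_mem h2)
    have h4 : (e c' : M) = c := rfl
    have hgen : Submodule.span R {e c'} = (⊤ : Submodule R ↥(Submodule.span R {c})) := by
      apply Submodule.map_injective_of_injective (Submodule.span R {c}).injective_subtype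
      rw [Submodule.map_span, Submodule.map_top, Submodule.range_subtype]
      simp [h4]
    have htot : ModRadical R ↥(Submodule.span R {c}) = ⊤ :=
      top_le_iff.mp (hgen ▸ Submodule.span_le.mpr (by simpa using h3))
    have hcne : Submodule.span R {c} ≠ ⊥ := by
      intro hbot
      exact hc0 ((Submodule.eq_bot_iff _).mp hbot c (Submodule.mem_span_singleton_self c))
    obtain ⟨-, hU⟩ := hCU (Submodule.span R {c}) hcne (Submodule.fg_span_singleton c)
    have hns : Subsingleton (↥(Submodule.span R {c}) ⧸ ModRadical R ↥(Submodule.span R {c})) :=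
      Submodule.Quotient.subsingleton_iff.mpr htot
    exact (not_subsingleton_iff_nontrivial.mpr hU.1) hns
  -- set up the complement
  set A' : Submodule R ↥K := (Submodule.span R {a}).comap K.subtype with hA'
  set B' : Submodule R ↥K := (Submodule.span R {b}).comap K.subtype with hB'
  have hdisj' : A' ⊓ B' = ⊥ := by
    rw [hA', hB', ← Submodule.comap_inf, hdisj]
    simp [Submodule.comap_bot, Submodule.ker_subtype]
  have hinj : Function.Injective (Submodule.map K.subtype) :=
    Submodule.map_injective_of_injective K.injective_subtype
  have hco : A' ⊔ B' = ⊤ := by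
    apply hinj
    rw [Submodule.map_sup, hA', hB', Submodule.map_comap_subtype,
      Submodule.map_comap_subtype, Submodule.map_top, Submodule.range_subtype,
      inf_eq_right.mpr hRaK, inf_eq_right.mpr hRbK]
  have hcompl : IsCompl A' B' := ⟨disjoint_iff.mpr hdisj', codisjoint_iff.mpr hco⟩
  set π : ↥K →ₗ[R] ↥A' := Submodule.linearProjOfIsCompl A' B' hcompl with hπdef
  set π' : ↥K →ₗ[R] ↥B' := Submodule.linearProjOfIsCompl B' A' hcompl.symm with hπ'def
  set RadA : Submodule R ↥K := (ModRadical R ↥A').map A'.subtype with hRadA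
  set RadB : Submodule R ↥K := (ModRadical R ↥B').map B'.subtype with hRadB
  have hRadA_le : RadA ≤ ModRadical R ↥K := map_radical_le A'.subtype
  have hRadB_le : RadB ≤ ModRadical R ↥K := map_radical_le B'.subtype
  have hRadA_A' : RadA ≤ A' := Submodule.map_subtype_le _ _
  have hRadB_B' : RadB ≤ B' := Submodule.map_subtype_le _ _
  have hdecomp : ModRadical R ↥K ≤ RadA ⊔ RadB := by
    intro x hx
    have h1 : (π x : ↥K) ∈ RadA :=
      Submodule.mem_map_of_mem (map_radical_le π (Submodule.mem_map_of_mem hx))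
    have h2 : (π' x : ↥K) ∈ RadB :=
      Submodule.mem_map_of_mem (map_radical_le π' (Submodule.mem_map_of_mem hx))
    have hsum : (π x : ↥K) + (π' x : ↥K) = x :=
      Submodule.projection_add_projection_eq_self hcompl x
    exact hsum ▸ Submodule.add_mem_sup h1 h2
  -- the generators are not in the radical of K
  have ha' : (⟨a, hRaK (Submodule.mem_span_singleton_self a)⟩ : ↥K) ∉ ModRadical R ↥K :=
    key a ha0 hRaK π (fun x => Submodule.linearProjOfIsCompl_apply_left hcompl x)
  have hb' : (⟨b, hRbK (Submodule.mem_span_singleton_self b)⟩ : ↥K) ∉ ModRadical R ↥K :=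
    key b hb0 hRbK π' (fun x => Submodule.linearProjOfIsCompl_apply_left hcompl.symm x)
  -- images in the quotient
  set Rad := ModRadical R ↥K with hRad
  set Abar : Submodule R (↥K ⧸ Rad) := A'.map Rad.mkQ with hAbar
  set Bbar : Submodule R (↥K ⧸ Rad) := B'.map Rad.mkQ with hBbar
  have haA' : (⟨a, hRaK (Submodule.mem_span_singleton_self a)⟩ : ↥K) ∈ A' :=
    Submodule.mem_span_singleton_self a
  have hbB' : (⟨b, hRbK (Submodule.mem_span_singleton_self b)⟩ : ↥K) ∈ B' :=
    Submodule.mem_span_singleton_self b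
  have hAbar_ne : Abar ≠ ⊥ := by
    rw [Submodule.ne_bot_iff]
    refine ⟨Rad.mkQ ⟨a, hRaK (Submodule.mem_span_singleton_self a)⟩,
      Submodule.mem_map_of_mem haA', ?_⟩
    simpa [Submodule.mkQ_apply, Submodule.Quotient.mk_eq_zero] using ha'
  have hBbar_ne : Bbar ≠ ⊥ := by
    rw [Submodule.ne_bot_iff]
    refine ⟨Rad.mkQ ⟨b, hRbK (Submodule.mem_span_singleton_self b)⟩,
      Submodule.mem_map_of_mem hbB', ?_⟩
    simpa [Submodule.mkQ_apply, Submodule.Quotient.mk_eq_zero] using hb'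
  apply hUnif.2 Abar Bbar hAbar_ne hBbar_ne
  rw [eq_bot_iff]
  rintro q ⟨hqA, hqB⟩
  obtain ⟨x, hxA, hx⟩ := hqA
  obtain ⟨y, hyB, hy⟩ := hqB
  have hxy : x - y ∈ Rad := by
    rw [← Submodule.Quotient.eq]
    exact (hx.trans hy.symm)
  obtain ⟨u, hu, v, hv, huv⟩ := Submodule.mem_sup.mp (hdecomp hxy)
  have h5 : x - u = v + y := by
    rw [sub_eq_iff_eq_add', ← add_assoc, huv]
    abel
  have h6 : x - u ∈ A' ⊓ B' := by
    constructor
    · exact A'.sub_mem hxA (hRadA_A' hu)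
    · rw [h5]; exact B'.add_mem (hRadB_B' hv) hyB
  have h7 : x = u := by
    have := hdisj' ▸ h6
    exact sub_eq_zero.mp (by simpa using this)
  have : q = 0 := by
    rw [← hx, Submodule.mkQ_apply, Submodule.Quotient.mk_eq_zero]
    exact h7 ▸ hRadA_le hu
  simp [this]
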